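/- The generalized thresholding operator T_GT^(K) is 1-attracting partially quasi-nonexpansive: for every x ∈ R^L and every y ∈ M_{J_x^(K)} (the subspace of vectors supported on the K largest-magnitude coordinates of x), one has ||x − T_GT^(K)(x)||² ≤ ||x − y||² − ||T_GT^(K)(x) − y||². -/

import Mathlib

/-- `T_GT^(K)` is 1-attracting partially quasi-nonexpansive: for every
`x` and every `y ∈ M_{J_x^(K)}`, `‖x − T x‖² ≤ ‖x − y‖² − ‖T x − y‖²`. -/
theorem gt_one_attracting
    (L K : ℕ) (hL : 2 ≤ L) (hK1 : 1 ≤ K) (hKL : K ≤ L - 1)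
    (Jsel : (Fin L → ℝ) → Finset (Fin L))
    (hJcard : ∀ x, (Jsel x).card = K)
    (hJsel : ∀ x : Fin L → ℝ, ∀ l ∈ Jsel x, ∀ l' ∉ Jsel x,
      |x l'| < |x l| ∨ (|x l'| = |x l| ∧ (l : ℕ) < (l' : ℕ)))
    (shr : ℝ → ℝ)
    (hshr1 : ∀ (x : Fin L → ℝ) (τ : ℝ), (∀ l ∈ Jsel x, |τ| ≤ |x l|) → τ * shr τ ≥ 0)
    (hshr2 : ∀ (x : Fin L → ℝ) (τ : ℝ), (∀ l ∈ Jsel x, |τ| ≤ |x l|) → |shr τ| ≤ |τ|)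
    (x y z : EuclideanSpace ℝ (Fin L))
    (hz : ∀ l, z l = if l ∈ Jsel x then x l else shr (x l))
    (hy : ∀ l, l ∉ Jsel x → y l = 0) :
    ‖x - z‖ ^ 2 ≤ ‖x - y‖ ^ 2 - ‖z - y‖ ^ 2 := by
  have hinner : (0:ℝ) ≤ inner ℝ (x - z) (z - y) := by
    rw [PiLp.inner_apply]
    apply Finset.sum_nonneg
    intro l _
    by_cases hl : l ∈ Jsel x
    · have h0 : (x - z) l = 0 := by simp [hz l, hl]
      simp [h0]
    · have hxz : (x - z) l = x l - shr (x l) := by simp [hz l, hl]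
      have hzy : (z - y) l = shr (x l) := by simp [hz l, hl, hy l hl]
      have hbound : ∀ l' ∈ Jsel x, |x l| ≤ |x l'| := by
        intro l' hl'
        rcases hJsel x l' hl' l hl with h | ⟨h, _⟩
        · exact le_of_lt h
        · exact le_of_eq h
      have h1 := hshr1 x (x l) hbound
      have h2 := hshr2 x (x l) hbound
      have h3 : shr (x l) * shr (x l) ≤ x l * shr (x l) := by
        calc shr (x l) * shr (x l) = |shr (x l)| * |shr (x l)| := (abs_mul_abs_self _).symm
          _ ≤ |x l| * |shr (x l)| :=
              mul_le_mul_of_nonneg_right h2 (abs_nonneg _)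
          _ = |x l * shr (x l)| := (abs_mul _ _).symm
          _ = x l * shr (x l) := abs_of_nonneg h1
      simp only [RCLike.inner_apply, conj_trivial]
      rw [hxz, hzy]
      nlinarith
  have key : ‖x - y‖ ^ 2 = ‖x - z‖ ^ 2 + 2 * inner ℝ (x - z) (z - y) + ‖z - y‖ ^ 2 := by
    have hxy : x - y = (x - z) + (z - y) := by abel
    rw [hxy, norm_add_sq_real]
  linarith
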